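/- Arithmetic Average safeguard (AA): Let α ∈ (0,1), let {r_k}_{k≥1} be nonnegative reals, and define μ_1 ≥ 0, m_1 = 1, and for each k: if r_{k+1} ≤ α μ_k then m_{k+1} = m_k + 1 and μ_{k+1} = (r_{k+1} + m_k μ_k)/(m_k + 1), and otherwise m_{k+1} = m_k and μ_{k+1} = μ_k. If the inequality r_{k+1} ≤ α μ_k holds for infinitely many k, then μ_k → 0. -/

import Mathlib

/-- **Arithmetic Average safeguard (AA).** With `α ∈ (0,1)`, nonnegative residuals
`{r_k}`, `μ_1 ≥ 0`, counter `m_1 = 1`, and the update: if `r_{k+1} ≤ α μ_k` then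
`m_{k+1} = m_k + 1` and `μ_{k+1} = (r_{k+1} + m_k μ_k)/(m_k + 1)`, otherwise
`m_{k+1} = m_k` and `μ_{k+1} = μ_k`. If the inequality holds infinitely often,
then `μ_k → 0`. (Indices are shifted so that `μ 0, m 0` play the roles of `μ_1, m_1`.) -/
theorem arithmetic_average_safeguard
    (α : ℝ) (hα : α ∈ Set.Ioo (0 : ℝ) 1)
    (r μ : ℕ → ℝ) (m : ℕ → ℕ)
    (hr : ∀ k, 0 ≤ r k) (hμ0 : 0 ≤ μ 0) (hm0 : m 0 = 1)
    (hupd : ∀ k : ℕ,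
      (r (k + 1) ≤ α * μ k →
        m (k + 1) = m k + 1 ∧
        μ (k + 1) = (r (k + 1) + (m k : ℝ) * μ k) / ((m k : ℝ) + 1)) ∧
      (¬ r (k + 1) ≤ α * μ k → m (k + 1) = m k ∧ μ (k + 1) = μ k))
    (hinf : {k : ℕ | r (k + 1) ≤ α * μ k}.Infinite) :
    Filter.Tendsto μ Filter.atTop (nhds 0) := by
  obtain ⟨hα0, hα1⟩ := hα
  -- m k ≥ 1
  have hm1 : ∀ k, 1 ≤ m k := by
    intro k; induction k with
    | zero => omega
    | succ k ih =>
      rcases le_or_gt (r (k+1)) (α * μ k) with h | h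
      · have := ((hupd k).1 h).1; omega
      · have := ((hupd k).2 (not_le.mpr h)).1; omega
  -- μ k ≥ 0
  have hμnn : ∀ k, 0 ≤ μ k := by
    intro k; induction k with
    | zero => exact hμ0
    | succ k ih =>
      rcases le_or_gt (r (k+1)) (α * μ k) with h | h
      · rw [((hupd k).1 h).2]
        exact div_nonneg (add_nonneg (hr _) (mul_nonneg (Nat.cast_nonneg _) ih))
          (by positivity)
      · rw [((hupd k).2 (not_le.mpr h)).2]; exact ih
  -- the product bound
  set P : ℕ → ℝ := fun j => ∏ i ∈ Finset.range j, ((i : ℝ) + 1 + α) / ((i : ℝ) + 2)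
    with hP
  have hPnn : ∀ j, 0 ≤ P j := by
    intro j
    exact Finset.prod_nonneg fun i _ => div_nonneg (by positivity) (by positivity)
  have hkey : ∀ k, μ k ≤ μ 0 * P (m k - 1) := by
    intro k; induction k with
    | zero => simp [hm0, hP]
    | succ k ih =>
      rcases le_or_gt (r (k+1)) (α * μ k) with h | h
      · obtain ⟨hm', hμ'⟩ := (hupd k).1 h
        have hmk := hm1 k
        obtain ⟨j, hj⟩ : ∃ j, m k = j + 1 := ⟨m k - 1, by omega⟩
        have hj' : m k - 1 = j := by omega
        have hjc : (m k : ℝ) = (j : ℝ) + 1 := by exact_mod_cast hj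
        have hfac : ((m k : ℝ) + α) / ((m k : ℝ) + 1) * P (m k - 1) = P (m k) := by
          rw [hj', hjc, hj, hP]
          simp only [Finset.prod_range_succ]
          ring
        have h1 : μ (k+1) ≤ ((m k : ℝ) + α) / ((m k : ℝ) + 1) * μ k := by
          rw [hμ', div_le_iff₀ (by positivity)]
          have : ((m k : ℝ) + α) / ((m k : ℝ) + 1) * μ k * ((m k : ℝ) + 1)
              = α * μ k + (m k : ℝ) * μ k := by
            field_simp; ring
          rw [this]
          exact add_le_add_left h _
        have h2 : ((m k : ℝ) + α) / ((m k : ℝ) + 1) * μ k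
            ≤ ((m k : ℝ) + α) / ((m k : ℝ) + 1) * (μ 0 * P (m k - 1)) := by
          apply mul_le_mul_of_nonneg_left ih
          positivity
        calc μ (k+1) ≤ ((m k : ℝ) + α) / ((m k : ℝ) + 1) * (μ 0 * P (m k - 1)) :=
              h1.trans h2
          _ = μ 0 * (((m k : ℝ) + α) / ((m k : ℝ) + 1) * P (m k - 1)) := by ring
          _ = μ 0 * P (m (k+1) - 1) := by rw [hfac, hm']; norm_num
      · obtain ⟨hm', hμ'⟩ := (hupd k).2 (not_le.mpr h)
        rw [hm', hμ']; exact ih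
  -- P tends to 0
  have hPexp : ∀ j, P j ≤ Real.exp (-(1 - α) * ∑ i ∈ Finset.range j, 1 / ((i : ℝ) + 2)) := by
    intro j
    have : ∀ i ∈ Finset.range j,
        ((i : ℝ) + 1 + α) / ((i : ℝ) + 2) ≤ Real.exp (-(1 / ((i : ℝ) + 2)) * (1 - α)) := by
      intro i _
      have h2 : (0:ℝ) < (i : ℝ) + 2 := by positivity
      have heq : ((i : ℝ) + 1 + α) / ((i : ℝ) + 2) = 1 - (1 - α) / ((i : ℝ) + 2) := by
        field_simp; ring
      rw [heq]
      have := Real.add_one_le_exp (-((1 - α) / ((i : ℝ) + 2)))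
      calc 1 - (1 - α) / ((i : ℝ) + 2) = -((1 - α) / ((i : ℝ) + 2)) + 1 := by ring
        _ ≤ Real.exp (-((1 - α) / ((i : ℝ) + 2))) := this
        _ = Real.exp (-(1 / ((i : ℝ) + 2)) * (1 - α)) := by ring_nf
    calc P j ≤ ∏ i ∈ Finset.range j, Real.exp (-(1 / ((i : ℝ) + 2)) * (1 - α)) :=
          Finset.prod_le_prod (fun i _ => div_nonneg (by positivity) (by positivity)) this
      _ = Real.exp (∑ i ∈ Finset.range j, -(1 / ((i : ℝ) + 2)) * (1 - α)) := by
          rw [Real.exp_sum]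
      _ = Real.exp (-(1 - α) * ∑ i ∈ Finset.range j, 1 / ((i : ℝ) + 2)) := by
          congr 1; rw [Finset.mul_sum]; exact Finset.sum_congr rfl fun i _ => by ring
  have hS : Filter.Tendsto (fun j => ∑ i ∈ Finset.range j, 1 / ((i : ℝ) + 2))
      Filter.atTop Filter.atTop := by
    have hH := Real.tendsto_sum_range_one_div_nat_succ_atTop
    have hH' : Filter.Tendsto (fun j => ∑ i ∈ Finset.range (j + 1), (1 / ((i : ℝ) + 1)))
        Filter.atTop Filter.atTop := hH.comp (Filter.tendsto_add_atTop_nat 1)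
    have heq : ∀ j, ∑ i ∈ Finset.range (j + 1), (1 / ((i : ℝ) + 1))
        = (∑ i ∈ Finset.range j, 1 / ((i : ℝ) + 2)) + 1 := by
      intro j
      rw [Finset.sum_range_succ' (fun i => 1 / ((i : ℝ) + 1))]
      congr 1
      · exact Finset.sum_congr rfl fun i _ => by push_cast; ring_nf
      · norm_num
    simp only [heq] at hH'
    exact Filter.tendsto_atTop_add_const_right _ (-1) hH' |>.congr (by intro j; ring)
  have hPto0 : Filter.Tendsto P Filter.atTop (nhds 0) := by
    apply squeeze_zero hPnn hPexp
    have : Filter.Tendsto (fun j => -(1 - α) * ∑ i ∈ Finset.range j, 1 / ((i : ℝ) + 2))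
        Filter.atTop Filter.atBot := by
      apply Filter.Tendsto.const_mul_atTop_of_neg _ hS
      linarith
    exact Real.tendsto_exp_atBot.comp this
  -- m k → ∞
  have hmmono : Monotone m := by
    apply monotone_nat_of_le_succ
    intro k
    rcases le_or_gt (r (k+1)) (α * μ k) with h | h
    · have := ((hupd k).1 h).1; omega
    · have := ((hupd k).2 (not_le.mpr h)).1; omega
  have hmub : ∀ N : ℕ, ∃ k, N ≤ m k := by
    intro N; induction N with
    | zero => exact ⟨0, Nat.zero_le _⟩
    | succ N ih =>
      obtain ⟨k, hk⟩ := ih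
      obtain ⟨k', hk', hkk'⟩ := hinf.exists_gt k
      have : m (k' + 1) = m k' + 1 := ((hupd k').1 hk').1
      exact ⟨k' + 1, by have := hmmono hkk'.le; omega⟩
  have hmtop : Filter.Tendsto m Filter.atTop Filter.atTop :=
    Filter.tendsto_atTop_atTop_of_monotone hmmono hmub
  have hm1top : Filter.Tendsto (fun k => m k - 1) Filter.atTop Filter.atTop :=
    (Filter.tendsto_sub_atTop_nat 1).comp hmtop
  -- conclude
  have hbd : Filter.Tendsto (fun k => μ 0 * P (m k - 1)) Filter.atTop (nhds 0) := by
    have := (hPto0.comp hm1top).const_mul (μ 0)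
    simpa using this
  exact squeeze_zero hμnn hkey hbd
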